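/- For every k ≥ 1, the generating set I_k of I^k is minimal: for every box spline symbol B ∈ I_k, B does not belong to the ideal of ℝ[z₁,z₂] generated by the reduced set I_k \ {B}; in particular, I_k \ {B} does not generate the ideal I^k. -/

import Mathlib

open MvPolynomial

/-- The ideal of bivariate real polynomials vanishing at the three points
`(−1,−1), (−1,1), (1,−1)`. -/
noncomputable def vI : Ideal (MvPolynomial (Fin 2) ℝ) where
  carrier := {p | ∀ ε ∈ ({![-1, -1], ![-1, 1], ![1, -1]} : Set (Fin 2 → ℝ)), eval ε p = 0}
  zero_mem' := by intro ε _; simp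
  add_mem' := by intro a b ha hb ε hε; simp [ha ε hε, hb ε hε]
  smul_mem' := by intro c p hp ε hε; simp [smul_eq_mul, hp ε hε]

/-- The normalized three-directional box spline symbol
`B#_{α,β,γ}(z₁,z₂) = ((1+z₁)/2)^α ((1+z₂)/2)^β ((1+z₁z₂)/2)^γ`. -/
noncomputable def Bs (α β γ : ℕ) : MvPolynomial (Fin 2) ℝ :=
  (C (1 / 2 : ℝ) * (1 + X 0)) ^ α * (C (1 / 2 : ℝ) * (1 + X 1)) ^ β *
    (C (1 / 2 : ℝ) * (1 + X 0 * X 1)) ^ γ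

/-- The generating set `I_k = { B#_{β,β,α}, B#_{β,α,β}, B#_{α,β,β} :
α = 0,…,⌊k/2⌋, β = k − α }`. -/
def Iset (k : ℕ) : Set (MvPolynomial (Fin 2) ℝ) :=
  {q | ∃ α : ℕ, α ≤ k / 2 ∧
    (q = Bs (k - α) (k - α) α ∨ q = Bs (k - α) α (k - α) ∨ q = Bs α (k - α) (k - α))}

/-! ### Auxiliary machinery: separating linear functionals.

We substitute `z₁ = -1 + u`, `z₂ = 1 + (1-x)u` (map `χ1`, a curve through the point
`(-1,1)`), resp. `z₁ = -1 + u`, `z₂ = -1 + x·u` (map `χ2`, through `(-1,-1)`),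
landing in `(ℝ[x])[u]`.  Extracting the coefficient of `u^k` and then of `x^m`
yields a functional that vanishes on a suitable ideal and separates each box
spline symbol from the span of the others. -/

noncomputable def χ1 : MvPolynomial (Fin 2) ℝ →ₐ[ℝ] Polynomial (Polynomial ℝ) :=
  aeval ![-1 + Polynomial.X, 1 + Polynomial.C (1 - Polynomial.X) * Polynomial.X]

noncomputable def χ2 : MvPolynomial (Fin 2) ℝ →ₐ[ℝ] Polynomial (Polynomial ℝ) :=
  aeval ![-1 + Polynomial.X, -1 + Polynomial.C Polynomial.X * Polynomial.X]

lemma Bs_congr {a b c a' b' c' : ℕ} (h1 : a = a') (h2 : b = b') (h3 : c = c') :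
    Bs a b c = Bs a' b' c' := by subst h1; subst h2; subst h3; rfl

lemma mem_vI_iff (p : MvPolynomial (Fin 2) ℝ) :
    p ∈ vI ↔ ∀ ε ∈ ({![-1, -1], ![-1, 1], ![1, -1]} : Set (Fin 2 → ℝ)), eval ε p = 0 :=
  Iff.rfl

lemma q1_mem : Bs 1 1 0 ∈ vI := by
  rw [mem_vI_iff]
  rintro ε (rfl | rfl | rfl) <;> simp [Bs]

lemma q2_mem : Bs 1 0 1 ∈ vI := by
  rw [mem_vI_iff]
  rintro ε (rfl | rfl | rfl) <;> simp [Bs]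

lemma q3_mem : Bs 0 1 1 ∈ vI := by
  rw [mem_vI_iff]
  rintro ε (rfl | rfl | rfl) <;> simp [Bs]

lemma Bs_mul (a b c a' b' c' : ℕ) :
    Bs a b c * Bs a' b' c' = Bs (a + a') (b + b') (c + c') := by
  simp only [Bs, pow_add]; ring

lemma Bs_pow (a b c n : ℕ) : Bs a b c ^ n = Bs (a * n) (b * n) (c * n) := by
  induction n with
  | zero => simp [Bs]
  | succ n ih => rw [pow_succ, ih, Bs_mul]; exact Bs_congr (by ring) (by ring) (by ring)

lemma w13_mem (i l : ℕ) : Bs i (i + l) l ∈ vI ^ (i + l) := by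
  have : Bs i (i + l) l = Bs 1 1 0 ^ i * Bs 0 1 1 ^ l := by
    rw [Bs_pow, Bs_pow, Bs_mul]; exact Bs_congr (by ring) (by ring) (by ring)
  rw [this, pow_add]
  exact Ideal.mul_mem_mul (Ideal.pow_mem_pow q1_mem i) (Ideal.pow_mem_pow q3_mem l)

lemma w23_mem (i l : ℕ) : Bs i l (i + l) ∈ vI ^ (i + l) := by
  have : Bs i l (i + l) = Bs 1 0 1 ^ i * Bs 0 1 1 ^ l := by
    rw [Bs_pow, Bs_pow, Bs_mul]; exact Bs_congr (by ring) (by ring) (by ring)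
  rw [this, pow_add]
  exact Ideal.mul_mem_mul (Ideal.pow_mem_pow q2_mem i) (Ideal.pow_mem_pow q3_mem l)

lemma chi1_Bs (a b ce : ℕ) :
    χ1 (Bs a b ce) = (Polynomial.C (Polynomial.C ((1:ℝ)/2)) ^ (a+b+ce) *
      ((2 + (1 - Polynomial.C Polynomial.X) * Polynomial.X) ^ b *
       (Polynomial.C Polynomial.X + (1 - Polynomial.C Polynomial.X) * Polynomial.X) ^ ce)) *
      Polynomial.X ^ (a + ce) := by
  simp only [Bs, χ1, map_mul, map_pow, map_add, map_one, aeval_X, aeval_C,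
    Matrix.cons_val_zero, Matrix.cons_val_one, Matrix.head_cons,
    Polynomial.algebraMap_apply, Polynomial.C_sub, Polynomial.C_1, Polynomial.algebraMap_eq,
    mul_pow]
  rw [show (1 + (-1 + Polynomial.X) : Polynomial (Polynomial ℝ)) = Polynomial.X by ring]
  rw [show ((1:Polynomial (Polynomial ℝ)) + (1 + (1 - Polynomial.C Polynomial.X) * Polynomial.X))
      = 2 + (1 - Polynomial.C Polynomial.X) * Polynomial.X by ring]
  rw [show ((1:Polynomial (Polynomial ℝ)) + (-1 + Polynomial.X) * (1 + (1 - Polynomial.C (Polynomial.X : Polynomial ℝ)) * Polynomial.X))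
      = (Polynomial.C Polynomial.X + (1 - Polynomial.C Polynomial.X) * Polynomial.X) * Polynomial.X by ring]
  rw [mul_pow]
  ring

lemma chi1_coeff_lt (a b ce j : ℕ) (hj : j < a + ce) : (χ1 (Bs a b ce)).coeff j = 0 := by
  rw [chi1_Bs, Polynomial.coeff_mul_X_pow', if_neg (by omega)]

lemma chi1_coeff_ord (a b ce : ℕ) :
    (χ1 (Bs a b ce)).coeff (a + ce)
      = Polynomial.C (((1:ℝ)/2)^(a+b+ce) * 2^b) * Polynomial.X ^ ce := by
  rw [chi1_Bs, Polynomial.coeff_mul_X_pow', if_pos le_rfl, Nat.sub_self,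
    Polynomial.coeff_zero_eq_eval_zero]
  simp only [Polynomial.eval_mul, Polynomial.eval_pow, Polynomial.eval_add, Polynomial.eval_sub,
    Polynomial.eval_one, Polynomial.eval_C, Polynomial.eval_X, Polynomial.eval_ofNat,
    mul_zero, add_zero]
  rw [Polynomial.C_mul, ← Polynomial.C_pow, Polynomial.C_pow (a := (2:ℝ)),
    show (Polynomial.C (2:ℝ)) = 2 by simp [map_ofNat], mul_assoc]

lemma chi2_Bs (a b ce : ℕ) :
    χ2 (Bs a b ce) = (Polynomial.C (Polynomial.C ((1:ℝ)/2)) ^ (a+b+ce) *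
      (Polynomial.C Polynomial.X ^ b *
       (2 - (1 + Polynomial.C Polynomial.X) * Polynomial.X + Polynomial.C Polynomial.X * Polynomial.X ^ 2) ^ ce)) *
      Polynomial.X ^ (a + b) := by
  simp only [Bs, χ2, map_mul, map_pow, map_add, map_one, aeval_X, aeval_C,
    Matrix.cons_val_zero, Matrix.cons_val_one, Matrix.head_cons,
    Polynomial.algebraMap_apply, Polynomial.algebraMap_eq, mul_pow]
  rw [show (1 + (-1 + Polynomial.X) : Polynomial (Polynomial ℝ)) = Polynomial.X by ring]
  rw [show ((1:Polynomial (Polynomial ℝ)) + (-1 + Polynomial.C (Polynomial.X : Polynomial ℝ) * Polynomial.X))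
      = Polynomial.C Polynomial.X * Polynomial.X by ring]
  rw [show ((1:Polynomial (Polynomial ℝ)) + (-1 + Polynomial.X) * (-1 + Polynomial.C (Polynomial.X : Polynomial ℝ) * Polynomial.X))
      = 2 - (1 + Polynomial.C Polynomial.X) * Polynomial.X + Polynomial.C Polynomial.X * Polynomial.X ^ 2 by ring]
  rw [mul_pow]
  ring

lemma chi2_coeff_lt (a b ce j : ℕ) (hj : j < a + b) : (χ2 (Bs a b ce)).coeff j = 0 := by
  rw [chi2_Bs, Polynomial.coeff_mul_X_pow', if_neg (by omega)]

lemma chi2_coeff_ord (a b ce : ℕ) :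
    (χ2 (Bs a b ce)).coeff (a + b)
      = Polynomial.C (((1:ℝ)/2)^(a+b+ce) * 2^ce) * Polynomial.X ^ b := by
  rw [chi2_Bs, Polynomial.coeff_mul_X_pow', if_pos le_rfl, Nat.sub_self,
    Polynomial.coeff_zero_eq_eval_zero]
  simp only [Polynomial.eval_mul, Polynomial.eval_pow, Polynomial.eval_add, Polynomial.eval_sub,
    Polynomial.eval_one, Polynomial.eval_C, Polynomial.eval_X, Polynomial.eval_ofNat,
    mul_zero, add_zero, zero_pow, sub_zero]
  rw [Polynomial.C_mul, ← Polynomial.C_pow, Polynomial.C_pow (a := (2:ℝ)),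
    show (Polynomial.C (2:ℝ)) = 2 by simp [map_ofNat], mul_assoc]
  ring

lemma chi1_const (p : MvPolynomial (Fin 2) ℝ) :
    ∃ r : ℝ, (χ1 p).coeff 0 = Polynomial.C r := by
  refine ⟨eval ![(-1:ℝ), 1] p, ?_⟩
  rw [Polynomial.coeff_zero_eq_eval_zero]
  induction p using MvPolynomial.induction_on with
  | C a => simp [χ1, Polynomial.algebraMap_apply, Polynomial.algebraMap_eq]
  | add p q hp hq => simp [map_add, hp, hq]
  | mul_X p i hp =>
      fin_cases i
      · rw [map_mul, Polynomial.eval_mul, hp]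
        simp [χ1]
      · rw [map_mul, Polynomial.eval_mul, hp]
        simp [χ1]

lemma chi2_const (p : MvPolynomial (Fin 2) ℝ) :
    ∃ r : ℝ, (χ2 p).coeff 0 = Polynomial.C r := by
  refine ⟨eval ![(-1:ℝ), -1] p, ?_⟩
  rw [Polynomial.coeff_zero_eq_eval_zero]
  induction p using MvPolynomial.induction_on with
  | C a => simp [χ2, Polynomial.algebraMap_apply, Polynomial.algebraMap_eq]
  | add p q hp hq => simp [map_add, hp, hq]
  | mul_X p i hp =>
      fin_cases i
      · rw [map_mul, Polynomial.eval_mul, hp]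
        simp [χ2]
      · rw [map_mul, Polynomial.eval_mul, hp]
        simp [χ2]

/-- The ideal of polynomials `p` such that `χ p` vanishes to order `k` in `u` and the
coefficient of `x^m u^k` vanishes. -/
noncomputable def Jid (χ : MvPolynomial (Fin 2) ℝ →ₐ[ℝ] Polynomial (Polynomial ℝ))
    (hχ : ∀ p, ∃ r : ℝ, (χ p).coeff 0 = Polynomial.C r) (k m : ℕ) :
    Ideal (MvPolynomial (Fin 2) ℝ) where
  carrier := {p | (∀ j < k, (χ p).coeff j = 0) ∧ ((χ p).coeff k).coeff m = 0}
  zero_mem' := by simp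
  add_mem' := by
    rintro p q ⟨hp1, hp2⟩ ⟨hq1, hq2⟩
    refine ⟨fun j hj => by simp [hp1 j hj, hq1 j hj], ?_⟩
    simp [map_add, Polynomial.coeff_add, hp2, hq2]
  smul_mem' := by
    rintro c p ⟨hp1, hp2⟩
    rw [smul_eq_mul]
    have key : ∀ j ≤ k, (χ (c * p)).coeff j
        = ∑ x ∈ Finset.HasAntidiagonal.antidiagonal j, (χ c).coeff x.1 * (χ p).coeff x.2 := by
      intro j hj
      rw [map_mul, Polynomial.coeff_mul]
    constructor
    · intro j hj
      rw [key j hj.le]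
      refine Finset.sum_eq_zero ?_
      rintro ⟨i, i'⟩ hmem
      rw [Finset.HasAntidiagonal.mem_antidiagonal] at hmem
      rw [hp1 i' (by omega), mul_zero]
    · rw [key k le_rfl]
      rw [Finset.sum_eq_single (0, k)]
      · obtain ⟨r, hr⟩ := hχ c
        rw [hr, Polynomial.coeff_C_mul, hp2, mul_zero]
      · rintro ⟨i, i'⟩ hmem hne
        rw [Finset.HasAntidiagonal.mem_antidiagonal] at hmem
        have : i' < k := by
          rcases Nat.lt_or_ge i' k with h | h
          · exact h
          · exfalso; apply hne; simp at hmem ⊢; omega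
        rw [hp1 i' this, mul_zero]
      · intro h
        exfalso; apply h; simp

lemma mem_Jid_iff (χ) (hχ : ∀ p, ∃ r : ℝ, (χ p).coeff 0 = Polynomial.C r) (k m : ℕ)
    (p : MvPolynomial (Fin 2) ℝ) :
    p ∈ Jid χ hχ k m ↔ (∀ j < k, (χ p).coeff j = 0) ∧ ((χ p).coeff k).coeff m = 0 :=
  Iff.rfl

lemma mem_J1 (a b ce k m : ℕ) (h1 : k ≤ a + ce) (h2 : a + ce = k → ce ≠ m) :
    Bs a b ce ∈ Jid χ1 chi1_const k m := by
  rw [mem_Jid_iff]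
  constructor
  · intro j hj; exact chi1_coeff_lt a b ce j (by omega)
  · rcases Nat.lt_or_ge k (a + ce) with h | h
    · rw [chi1_coeff_lt a b ce k h, Polynomial.coeff_zero]
    · have he : a + ce = k := by omega
      rw [← he, chi1_coeff_ord, Polynomial.coeff_C_mul, Polynomial.coeff_X_pow,
        if_neg (Ne.symm (h2 he)), mul_zero]

lemma not_mem_J1 (a b ce k : ℕ) (h1 : a + ce = k) :
    Bs a b ce ∉ Jid χ1 chi1_const k ce := by
  rw [mem_Jid_iff]
  rintro ⟨-, h⟩
  rw [← h1, chi1_coeff_ord, Polynomial.coeff_C_mul, Polynomial.coeff_X_pow, if_pos rfl,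
    mul_one] at h
  have : ((1:ℝ)/2)^(a+b+ce) * 2^b > 0 := by positivity
  linarith

lemma mem_J2 (a b ce k m : ℕ) (h1 : k ≤ a + b) (h2 : a + b = k → b ≠ m) :
    Bs a b ce ∈ Jid χ2 chi2_const k m := by
  rw [mem_Jid_iff]
  constructor
  · intro j hj; exact chi2_coeff_lt a b ce j (by omega)
  · rcases Nat.lt_or_ge k (a + b) with h | h
    · rw [chi2_coeff_lt a b ce k h, Polynomial.coeff_zero]
    · have he : a + b = k := by omega
      rw [← he, chi2_coeff_ord, Polynomial.coeff_C_mul, Polynomial.coeff_X_pow,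
        if_neg (Ne.symm (h2 he)), mul_zero]

lemma not_mem_J2 (a b ce k : ℕ) (h1 : a + b = k) :
    Bs a b ce ∉ Jid χ2 chi2_const k b := by
  rw [mem_Jid_iff]
  rintro ⟨-, h⟩
  rw [← h1, chi2_coeff_ord, Polynomial.coeff_C_mul, Polynomial.coeff_X_pow, if_pos rfl,
    mul_one] at h
  have : ((1:ℝ)/2)^(a+b+ce) * 2^ce > 0 := by positivity
  linarith

lemma main_aux (k : ℕ) (B : MvPolynomial (Fin 2) ℝ) (J : Ideal (MvPolynomial (Fin 2) ℝ))
    (hsub : Iset k \ {B} ⊆ (J : Set (MvPolynomial (Fin 2) ℝ)))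
    (hBnot : B ∉ J)
    (w : MvPolynomial (Fin 2) ℝ) (hw : w ∈ vI ^ k) (hwnot : w ∉ J) :
    B ∉ Ideal.span (Iset k \ {B}) ∧ Ideal.span (Iset k \ {B}) ≠ vI ^ k := by
  have hle : Ideal.span (Iset k \ {B}) ≤ J := Ideal.span_le.mpr hsub
  exact ⟨fun h => hBnot (hle h), fun h => hwnot (hle (h ▸ hw))⟩

/-- Minimality of the generating set `I_k` of `I^k`: removing any element `B` of `I_k`
yields a set that does not contain `B` in its span; in particular it no longer
generates `I^k`. -/
theorem stmt_16 (k : ℕ) (hk : 1 ≤ k) (B : MvPolynomial (Fin 2) ℝ) (hB : B ∈ Iset k) :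
    B ∉ Ideal.span (Iset k \ {B}) ∧ Ideal.span (Iset k \ {B}) ≠ vI ^ k := by
  obtain ⟨α, hα, hcase⟩ := hB
  have hα2 : 2 * α ≤ k := by omega
  rcases hcase with rfl | rfl | rfl
  · -- B = Bs (k-α) (k-α) α ; use χ1, marker m = α
    refine main_aux k _ (Jid χ1 chi1_const k α) ?_ ?_ (Bs (k-α) k α) ?_ ?_
    · rintro g ⟨⟨α', hα', hc⟩, hgne⟩
      simp only [Set.mem_singleton_iff] at hgne
      have hα'2 : 2 * α' ≤ k := by omega
      rcases hc with rfl | rfl | rfl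
      · refine mem_J1 _ _ _ _ _ (by omega) (fun _ hce => ?_)
        exact hgne (Bs_congr (by omega) (by omega) (by omega))
      · refine mem_J1 _ _ _ _ _ (by omega) (fun he hce => ?_)
        exact hgne (Bs_congr (by omega) (by omega) (by omega))
      · refine mem_J1 _ _ _ _ _ (by omega) (fun _ hce => ?_)
        exact hgne (Bs_congr (by omega) (by omega) (by omega))
    · exact not_mem_J1 _ _ _ _ (by omega)
    · have := w13_mem (k - α) α
      rwa [show k - α + α = k by omega] at this
    · exact not_mem_J1 _ _ _ _ (by omega)
  · -- B = Bs (k-α) α (k-α) ; use χ2, marker m = α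
    refine main_aux k _ (Jid χ2 chi2_const k α) ?_ ?_ (Bs (k-α) α k) ?_ ?_
    · rintro g ⟨⟨α', hα', hc⟩, hgne⟩
      simp only [Set.mem_singleton_iff] at hgne
      have hα'2 : 2 * α' ≤ k := by omega
      rcases hc with rfl | rfl | rfl
      · refine mem_J2 _ _ _ _ _ (by omega) (fun he hce => ?_)
        exact hgne (Bs_congr (by omega) (by omega) (by omega))
      · refine mem_J2 _ _ _ _ _ (by omega) (fun _ hce => ?_)
        exact hgne (Bs_congr (by omega) (by omega) (by omega))
      · refine mem_J2 _ _ _ _ _ (by omega) (fun _ hce => ?_)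
        exact hgne (Bs_congr (by omega) (by omega) (by omega))
    · exact not_mem_J2 _ _ _ _ (by omega)
    · have := w23_mem (k - α) α
      rwa [show k - α + α = k by omega] at this
    · exact not_mem_J2 _ _ _ _ (by omega)
  · -- B = Bs α (k-α) (k-α) ; use χ1, marker m = k - α
    refine main_aux k _ (Jid χ1 chi1_const k (k - α)) ?_ ?_ (Bs α k (k-α)) ?_ ?_
    · rintro g ⟨⟨α', hα', hc⟩, hgne⟩
      simp only [Set.mem_singleton_iff] at hgne
      have hα'2 : 2 * α' ≤ k := by omega
      rcases hc with rfl | rfl | rfl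
      · refine mem_J1 _ _ _ _ _ (by omega) (fun _ hce => ?_)
        exact hgne (Bs_congr (by omega) (by omega) (by omega))
      · refine mem_J1 _ _ _ _ _ (by omega) (fun he hce => ?_)
        exact hgne (Bs_congr (by omega) (by omega) (by omega))
      · refine mem_J1 _ _ _ _ _ (by omega) (fun _ hce => ?_)
        exact hgne (Bs_congr (by omega) (by omega) (by omega))
    · exact not_mem_J1 _ _ _ _ (by omega)
    · have := w13_mem α (k - α)
      rwa [show α + (k - α) = k by omega] at this
    · exact not_mem_J1 _ _ _ _ (by omega)
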